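/- arXiv:2411.00296 — 3 statements merged into one kernel-verified Lean document; each statement's English description precedes it below -/
import Mathlib

section
/- Raabe's formula: for every real number x ≥ 0, ∫_x^{x+1} ln Γ(t) dt = x ln x − x + (1/2) ln(2π), where for x = 0 the term x ln x is interpreted as 0. -/
open Real intervalIntegral

namespace RaabeAux

open MeasureTheory Filter Topology Set Nat

noncomputable def lg (t : ℝ) : ℝ := Real.log (Real.Gamma t)

lemma lg_continuousAt {x : ℝ} (hx : 0 < x) : ContinuousAt lg x := by
  have h1 : ContinuousAt Real.Gamma x := by
    refine (Real.differentiableAt_Gamma ?_).continuousAt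
    intro m
    exact ((neg_nonpos.mpr (Nat.cast_nonneg m)).trans_lt hx).ne'
  exact (Real.continuousAt_log (Real.Gamma_pos_of_pos hx).ne').comp h1

lemma lg_continuousOn : ContinuousOn lg (Ioi 0) :=
  fun x hx => (lg_continuousAt hx).continuousWithinAt

lemma lg_II {a b : ℝ} (ha : 0 < a) (hb : 0 < b) : IntervalIntegrable lg volume a b := by
  refine (lg_continuousOn.mono ?_).intervalIntegrable
  intro t ht
  have := ht.1
  simp only [mem_uIcc] at ht
  rcases ht with h | h
  · exact lt_of_lt_of_le ha h.1
  · exact lt_of_lt_of_le hb h.1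

lemma log_II01 : IntervalIntegrable Real.log volume 0 1 := by
  have h1 : IntervalIntegrable (fun x : ℝ => 2 * x ^ (-(1/2) : ℝ)) volume 0 1 :=
    (intervalIntegral.intervalIntegrable_rpow' (by norm_num)).const_mul 2
  refine h1.mono_fun' Real.measurable_log.aestronglyMeasurable ?_
  rw [uIoc_of_le (zero_le_one)]
  filter_upwards [ae_restrict_mem measurableSet_Ioc] with x hx
  have hx0 : 0 < x := hx.1
  have hy0 : 0 < x ^ ((1:ℝ)/2) := Real.rpow_pos_of_pos hx0 _
  have hlog : Real.log x = 2 * Real.log (x ^ ((1:ℝ)/2)) := by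
    rw [Real.log_rpow hx0]; ring
  have hb : Real.log ((x ^ ((1:ℝ)/2))⁻¹) ≤ (x ^ ((1:ℝ)/2))⁻¹ - 1 :=
    Real.log_le_sub_one_of_pos (by positivity)
  rw [Real.log_inv] at hb
  have hnorm : ‖Real.log x‖ ≤ 2 * (x ^ ((1:ℝ)/2))⁻¹ := by
    have hlx : Real.log x ≤ 0 := Real.log_nonpos hx0.le hx.2
    rw [Real.norm_eq_abs, abs_of_nonpos hlx, hlog]
    nlinarith [inv_pos.mpr hy0]
  calc ‖Real.log x‖ ≤ 2 * (x ^ ((1:ℝ)/2))⁻¹ := hnorm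
    _ = 2 * x ^ (-(1/2) : ℝ) := by rw [← Real.rpow_neg hx0.le]

lemma lg_II01 : IntervalIntegrable lg volume 0 1 := by
  have hcont : ContinuousOn (fun x : ℝ => Real.log (Real.Gamma (x + 1))) (uIcc (0:ℝ) 1) := by
    refine (lg_continuousOn.comp (continuous_id.add continuous_const).continuousOn ?_)
    intro x hx
    rw [uIcc_of_le zero_le_one] at hx
    exact mem_Ioi.mpr (by simp only [id_eq]; linarith [hx.1])
  have hInt : IntervalIntegrable (fun x => Real.log (Real.Gamma (x + 1)) - Real.log x)
      volume 0 1 := hcont.intervalIntegrable.sub log_II01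
  refine hInt.congr ?_
  rw [uIoc_of_le (zero_le_one)]
  intro x hx
  have hx0 : 0 < x := hx.1
  beta_reduce
  rw [lg, Real.Gamma_add_one hx0.ne', Real.log_mul hx0.ne' (Real.Gamma_pos_of_pos hx0).ne']
  ring

lemma lg_II' {a b : ℝ} (ha : 0 ≤ a) (hb : 0 ≤ b) : IntervalIntegrable lg volume a b := by
  rcases ha.eq_or_lt with rfl | ha'
  · rcases hb.eq_or_lt with rfl | hb'
    · exact IntervalIntegrable.refl
    · exact lg_II01.trans (lg_II one_pos hb')
  · rcases hb.eq_or_lt with rfl | hb'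
    · exact ((lg_II01.trans (lg_II one_pos ha'))).symm
    · exact lg_II ha' hb'


noncomputable def G (x : ℝ) : ℝ := ∫ t in x..(x + 1), lg t

lemma G_hasDerivAt {x : ℝ} (hx : 0 < x) : HasDerivAt G (Real.log x) x := by
  have hmeas : ∀ y : ℝ, 0 < y → StronglyMeasurableAtFilter lg (𝓝 y) volume := fun y hy =>
    ContinuousOn.stronglyMeasurableAtFilter isOpen_Ioi lg_continuousOn y hy
  have h2 : HasDerivAt (fun y : ℝ => ∫ t in (1:ℝ)..y, lg t) (lg x) x :=
    integral_hasDerivAt_right (lg_II one_pos hx) (hmeas x hx) (lg_continuousAt hx)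
  have h1 : HasDerivAt (fun y : ℝ => ∫ t in (1:ℝ)..(y + 1), lg t) (lg (x + 1)) x := by
    have h3 : HasDerivAt (fun u : ℝ => ∫ t in (1:ℝ)..u, lg t) (lg (x + 1)) (x + 1) :=
      integral_hasDerivAt_right (lg_II one_pos (by linarith)) (hmeas _ (by linarith))
        (lg_continuousAt (by linarith))
    have h4 := h3.comp x ((hasDerivAt_id x).add_const 1)
    rw [mul_one] at h4
    exact h4
  have hev : G =ᶠ[𝓝 x] fun y => (∫ t in (1:ℝ)..(y + 1), lg t) - ∫ t in (1:ℝ)..y, lg t := by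
    filter_upwards [isOpen_Ioi.eventually_mem (mem_Ioi.mpr hx)] with y hy0
    rw [G, eq_sub_iff_add_eq, add_comm, intervalIntegral.integral_add_adjacent_intervals
      (lg_II one_pos hy0) (lg_II hy0 (by linarith [mem_Ioi.mp hy0]))]
  have := (h1.sub h2).congr_of_eventuallyEq hev
  have hlg : lg (x + 1) - lg x = Real.log x := by
    rw [lg, lg, Real.Gamma_add_one hx.ne',
      Real.log_mul hx.ne' (Real.Gamma_pos_of_pos hx).ne']
    ring
  rwa [hlg] at this


noncomputable def K (x : ℝ) : ℝ := G x - (x * Real.log x - x)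

lemma K_hasDerivAt {x : ℝ} (hx : 0 < x) : HasDerivAt K 0 x := by
  have h1 := (G_hasDerivAt hx).sub ((Real.hasDerivAt_mul_log hx.ne').sub (hasDerivAt_id x))
  rw [show (0:ℝ) = Real.log x - (Real.log x + 1 - 1) by ring]
  exact h1

lemma K_const {a b : ℝ} (ha : 0 < a) (hb : 0 < b) : K a = K b := by
  wlog hab : a ≤ b generalizing a b
  · exact (this hb ha (le_of_not_ge hab)).symm
  have hcont : ContinuousOn K (Icc a b) := fun y hy =>
    ((K_hasDerivAt (lt_of_lt_of_le ha hy.1)).continuousAt).continuousWithinAt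
  have hderiv : ∀ y ∈ Ico a b, HasDerivWithinAt K 0 (Ici y) y := fun y hy =>
    (K_hasDerivAt (lt_of_lt_of_le ha hy.1)).hasDerivWithinAt
  exact (constant_of_has_deriv_right_zero hcont hderiv b (right_mem_Icc.mpr hab)).symm

lemma lg_convexOn : ConvexOn ℝ (Ioi 0) lg := Real.convexOn_log_Gamma

lemma upper_bound {a : ℝ} (ha : 0 < a) :
    (∫ t in a..(a + 1), lg t) ≤ (lg a + lg (a + 1)) / 2 := by
  have key : ∀ t ∈ Icc a (a + 1), lg t ≤ lg a + (t - a) * (lg (a + 1) - lg a) := by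
    intro t ht
    have h1 : (1 - (t - a)) • a + (t - a) • (a + 1) = t := by simp; ring
    have h2 := lg_convexOn.2 (mem_Ioi.mpr ha) (mem_Ioi.mpr (by linarith : (0:ℝ) < a + 1))
      (by linarith [ht.2] : (0:ℝ) ≤ 1 - (t - a)) (by linarith [ht.1] : (0:ℝ) ≤ t - a)
      (by ring)
    rw [h1, smul_eq_mul, smul_eq_mul] at h2
    calc lg t ≤ (1 - (t - a)) * lg a + (t - a) * lg (a + 1) := h2
      _ = lg a + (t - a) * (lg (a + 1) - lg a) := by ring
  have hIrhs : IntervalIntegrable (fun t => lg a + (t - a) * (lg (a + 1) - lg a))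
      volume a (a + 1) :=
    (continuous_const.add ((continuous_id.sub continuous_const).mul continuous_const)).intervalIntegrable _ _
  have hmono := intervalIntegral.integral_mono_on (by linarith : a ≤ a + 1)
    (lg_II ha (by linarith)) hIrhs (fun t ht => key t ht)
  have hcalc : (∫ t in a..(a + 1), (lg a + (t - a) * (lg (a + 1) - lg a)))
      = (lg a + lg (a + 1)) / 2 := by
    have hmul : IntervalIntegrable (fun t : ℝ => (t - a) * (lg (a + 1) - lg a))
        volume a (a + 1) := (Continuous.intervalIntegrable (by fun_prop) _ _)
    rw [intervalIntegral.integral_add intervalIntegrable_const hmul,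
      intervalIntegral.integral_const, intervalIntegral.integral_mul_const]
    have h5 : (∫ t in a..(a + 1), (t - a)) = 1 / 2 := by
      rw [intervalIntegral.integral_comp_sub_right (fun u => u) a]
      norm_num
    rw [h5]
    simp
    ring
  linarith [hmono, hcalc.symm.le]

lemma lower_bound {a : ℝ} (ha : 0 < a) :
    lg (a + 1 / 2) ≤ ∫ t in a..(a + 1), lg t := by
  have hrefl : (∫ t in a..(a + 1), lg (2 * a + 1 - t)) = ∫ t in a..(a + 1), lg t := by
    rw [intervalIntegral.integral_comp_sub_left lg (2 * a + 1)]
    congr 1 <;> ring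
  have key : ∀ t ∈ Icc a (a + 1), lg (a + 1 / 2) ≤ (lg t + lg (2 * a + 1 - t)) / 2 := by
    intro t ht
    have h2 := lg_convexOn.2 (mem_Ioi.mpr (by linarith [ht.1] : (0:ℝ) < t))
      (mem_Ioi.mpr (by linarith [ht.2] : (0:ℝ) < 2 * a + 1 - t))
      (by norm_num : (0:ℝ) ≤ (1:ℝ)/2) (by norm_num : (0:ℝ) ≤ (1:ℝ)/2) (by norm_num)
    have h1 : ((1:ℝ)/2) • t + ((1:ℝ)/2) • (2 * a + 1 - t) = a + 1 / 2 := by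
      simp; ring
    rw [h1] at h2
    have : ((1:ℝ)/2) * lg t + ((1:ℝ)/2) * lg (2 * a + 1 - t) = (lg t + lg (2 * a + 1 - t)) / 2 := by ring
    rw [smul_eq_mul, smul_eq_mul, this] at h2
    exact h2
  have hcont2 : ContinuousOn (fun t => lg (2 * a + 1 - t)) (uIcc a (a + 1)) := by
    rw [uIcc_of_le (by linarith : a ≤ a + 1)]
    refine lg_continuousOn.comp (continuous_const.sub continuous_id).continuousOn ?_
    intro t ht
    exact mem_Ioi.mpr (by simpa using by linarith [ht.2] : (0:ℝ) < 2 * a + 1 - t)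
  have hIrhs : IntervalIntegrable (fun t => (lg t + lg (2 * a + 1 - t)) / 2) volume a (a + 1) := by
    have h1 : ContinuousOn lg (uIcc a (a + 1)) := by
      rw [uIcc_of_le (by linarith : a ≤ a + 1)]
      exact lg_continuousOn.mono (fun t ht => mem_Ioi.mpr (by linarith [ht.1]))
    exact ((h1.add hcont2).div_const 2).intervalIntegrable
  have hmono := intervalIntegral.integral_mono_on (by linarith : a ≤ a + 1)
    intervalIntegrable_const hIrhs (fun t ht => key t ht)
  have hrcalc : (∫ t in a..(a + 1), (lg t + lg (2 * a + 1 - t)) / 2) = ∫ t in a..(a + 1), lg t := by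
    rw [intervalIntegral.integral_div]
    rw [intervalIntegral.integral_add (lg_II ha (by linarith)) (hcont2.intervalIntegrable)]
    rw [hrefl]
    ring
  have hlcalc : (∫ _ in a..(a + 1), lg (a + 1 / 2)) = lg (a + 1 / 2) := by simp
  linarith [hmono]

noncomputable def s (n : ℕ) : ℝ := Real.log (Stirling.stirlingSeq n)

lemma stirling_log (m : ℕ) (hm : m ≠ 0) :
    Real.log (m ! : ℝ) = s m + 1/2 * Real.log (2 * (m:ℝ)) + (m:ℝ) * Real.log m - m := by
  have h := Stirling.log_stirlingSeq_formula m
  have h2 : Real.log ((m:ℝ) / Real.exp 1) = Real.log m - 1 := by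
    rw [Real.log_div (Nat.cast_ne_zero.mpr hm) (Real.exp_ne_zero 1), Real.log_exp]
  rw [h2] at h
  rw [s, h]
  ring

lemma lg_rec {x : ℝ} (hx : 0 < x) : lg (x + 1) = Real.log x + lg x := by
  rw [lg, lg, Real.Gamma_add_one hx.ne',
    Real.log_mul hx.ne' (Real.Gamma_pos_of_pos hx).ne']

lemma lg_nat_succ (m : ℕ) : lg ((m:ℝ) + 1) = Real.log (m ! : ℝ) := by
  rw [lg, Real.Gamma_nat_eq_factorial]

lemma s_tendsto : Tendsto s atTop (𝓝 (Real.log π / 2)) := by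
  have h0 : (0:ℝ) < √π := Real.sqrt_pos.mpr pi_pos
  have h := ((Real.continuousAt_log h0.ne').tendsto).comp Stirling.tendsto_stirlingSeq_sqrt_pi
  rw [Real.log_sqrt pi_pos.le] at h
  exact h

lemma K_value {x : ℝ} (hx : 0 < x) : K x = 1 / 2 * Real.log (2 * π) := by
  -- upper bounds
  have hub : ∀ n : ℕ, K x ≤ s (n + 1) + 1/2 * Real.log 2 := by
    intro n
    set N : ℝ := ((n:ℝ) + 1) with hN
    have hN0 : 0 < N := by positivity
    have hNc : ((n + 1 : ℕ) : ℝ) = N := by push_cast; ring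
    have hKx : K x = K N := K_const hx hN0
    have hG := upper_bound hN0
    have e3 : lg (N + 1) = Real.log N + lg N := lg_rec hN0
    have e4 : lg (N + 1) = Real.log ((n + 1)! : ℝ) := by
      rw [← hNc]; exact lg_nat_succ (n + 1)
    have e5 : Real.log ((n + 1)! : ℝ)
        = s (n + 1) + 1/2 * Real.log (2 * N) + N * Real.log N - N := by
      rw [stirling_log (n + 1) (Nat.succ_ne_zero n), hNc]
    have e6 : Real.log (2 * N) = Real.log 2 + Real.log N :=
      Real.log_mul two_ne_zero hN0.ne'
    rw [hKx, K, G]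
    linarith [hG]
  -- lower bounds
  have hlb : ∀ n : ℕ,
      s (2 * (n + 1)) - s (n + 1) + 1/2 * Real.log 2 + 1/2 * Real.log π ≤ K x := by
    intro n
    set N : ℝ := ((n:ℝ) + 1) with hN
    have hN0 : 0 < N := by positivity
    have hNc : ((n + 1 : ℕ) : ℝ) = N := by push_cast; ring
    have h2Nc : ((2 * (n + 1) : ℕ) : ℝ) = 2 * N := by push_cast; ring
    have hL1 : Real.log (2 * N) = Real.log 2 + Real.log N :=
      Real.log_mul two_ne_zero hN0.ne'
    have hL4 : Real.log (2 * (2 * N)) = Real.log 2 + (Real.log 2 + Real.log N) := by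
      rw [Real.log_mul two_ne_zero (by positivity), hL1]
    -- hE : expansion of lg (2N)
    have hE : lg (2 * N) = s (2 * (n + 1))
        + 1/2 * (Real.log 2 + (Real.log 2 + Real.log N))
        + 2 * N * (Real.log 2 + Real.log N) - 2 * N - (Real.log 2 + Real.log N) := by
      have A2 : lg (2 * N + 1) = Real.log (2 * N) + lg (2 * N) := lg_rec (by positivity)
      have A3 : lg (2 * N + 1) = Real.log ((2 * (n + 1))! : ℝ) := by
        rw [← h2Nc]; exact lg_nat_succ (2 * (n + 1))
      have A4 := stirling_log (2 * (n + 1)) (by positivity)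
      rw [h2Nc, hL4, hL1] at A4
      linarith [A2, A3, A4]
    -- hF : expansion of lg N
    have hF : lg N = s (n + 1) + 1/2 * (Real.log 2 + Real.log N)
        + N * Real.log N - N - Real.log N := by
      have A5 : lg (N + 1) = Real.log N + lg N := lg_rec hN0
      have A6 : lg (N + 1) = Real.log ((n + 1)! : ℝ) := by
        rw [← hNc]; exact lg_nat_succ (n + 1)
      have A7 := stirling_log (n + 1) (Nat.succ_ne_zero n)
      rw [hNc, hL1] at A7
      linarith [A5, A6, A7]
    -- hD : doubling formula
    have hD : lg N + lg (N + 1/2) = lg (2 * N) + (1 - 2 * N) * Real.log 2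
        + Real.log π / 2 := by
      have h := Real.Gamma_mul_Gamma_add_half_of_pos hN0
      have hΓ1 : Real.Gamma N ≠ 0 := (Real.Gamma_pos_of_pos hN0).ne'
      have hΓ2 : Real.Gamma (N + 1/2) ≠ 0 := (Real.Gamma_pos_of_pos (by positivity)).ne'
      have hΓ3 : Real.Gamma (2 * N) ≠ 0 := (Real.Gamma_pos_of_pos (by positivity)).ne'
      have hp : (2:ℝ) ^ (1 - 2 * N) ≠ 0 := (Real.rpow_pos_of_pos two_pos _).ne'
      have hsq : √π ≠ 0 := (Real.sqrt_pos.mpr pi_pos).ne'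
      have hlog : Real.log (Real.Gamma N * Real.Gamma (N + 1/2))
          = Real.log (Real.Gamma (2 * N) * 2 ^ (1 - 2 * N) * √π) := by rw [h]
      rw [Real.log_mul hΓ1 hΓ2, Real.log_mul (mul_ne_zero hΓ3 hp) hsq,
        Real.log_mul hΓ3 hp, Real.log_rpow two_pos, Real.log_sqrt pi_pos.le] at hlog
      rw [lg, lg, lg]
      linarith [hlog]
    have hEq : lg (N + 1/2) = s (2 * (n + 1)) - s (n + 1) + 1/2 * Real.log 2
        + 1/2 * Real.log π + N * Real.log N - N := by
      linear_combination hD + hE - hF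
    have hKx : K x = K N := K_const hx hN0
    have hG := lower_bound hN0
    rw [hKx, K, G]
    linarith [hG]
  -- limits
  have hms : Tendsto (fun n : ℕ => s (n + 1)) atTop (𝓝 (Real.log π / 2)) :=
    s_tendsto.comp (tendsto_add_atTop_nat 1)
  have hms2 : Tendsto (fun n : ℕ => s (2 * (n + 1))) atTop (𝓝 (Real.log π / 2)) := by
    refine s_tendsto.comp ?_
    exact tendsto_atTop_mono (fun n => by omega) (tendsto_add_atTop_nat 1)
  have hub' : K x ≤ Real.log π / 2 + 1/2 * Real.log 2 :=
    ge_of_tendsto (hms.add_const (1/2 * Real.log 2)) (Eventually.of_forall hub)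
  have hlb' : Real.log π / 2 - Real.log π / 2 + 1/2 * Real.log 2 + 1/2 * Real.log π ≤ K x := by
    refine le_of_tendsto (f := fun n : ℕ => s (2 * (n + 1)) - s (n + 1) + 1/2 * Real.log 2 + 1/2 * Real.log π) (x := atTop) ?_ (Eventually.of_forall hlb)
    exact (((hms2.sub hms).add_const (1/2 * Real.log 2)).add_const (1/2 * Real.log π))
  have hfin : Real.log (2 * π) = Real.log 2 + Real.log π :=
    Real.log_mul two_ne_zero pi_pos.ne'
  linarith [hub', hlb']


lemma G_pos_case {x : ℝ} (hx : 0 < x) :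
    G x = x * Real.log x - x + 1 / 2 * Real.log (2 * π) := by
  have := K_value hx
  rw [K] at this
  linarith

lemma G_zero : G 0 = 1 / 2 * Real.log (2 * π) := by
  set c := 1 / 2 * Real.log (2 * π)
  have hint : IntegrableOn lg (uIcc (0:ℝ) 2) volume :=
    (intervalIntegrable_iff' (f := lg) (a := (0:ℝ)) (b := 2) (μ := volume)).mp (lg_II' le_rfl (by norm_num))
  have hF := intervalIntegral.continuousOn_primitive_interval (a := (0:ℝ)) (b := 2) hint
  set F : ℝ → ℝ := fun y => ∫ t in (0:ℝ)..y, lg t with hFdef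
  have huIcc : uIcc (0:ℝ) 2 = Icc (0:ℝ) 2 := uIcc_of_le (by norm_num)
  rw [huIcc] at hF
  -- G y = F (y+1) - F y on [0,1]
  have hGF : ∀ y ∈ Icc (0:ℝ) 1, G y = F (y + 1) - F y := by
    intro y hy
    rw [G, hFdef, eq_sub_iff_add_eq, add_comm,
      intervalIntegral.integral_add_adjacent_intervals (lg_II' le_rfl hy.1)
        (lg_II' hy.1 (by linarith [hy.1]))]
  -- continuity within
  have hcF1 : ContinuousWithinAt F (Icc (0:ℝ) 2) 0 := hF 0 (by norm_num)
  have hcF2 : ContinuousWithinAt F (Icc (0:ℝ) 2) 1 := hF 1 (by norm_num)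
  have hmap : MapsTo (fun y : ℝ => y + 1) (Icc (0:ℝ) 1) (Icc (0:ℝ) 2) := by
    intro y hy
    simp only [mem_Icc] at hy ⊢
    constructor <;> linarith [hy.1, hy.2]
  have hcomp : ContinuousWithinAt (fun y : ℝ => F (y + 1)) (Icc (0:ℝ) 1) 0 := by
    have h1 : ContinuousWithinAt (fun y : ℝ => y + 1) (Icc (0:ℝ) 1) 0 :=
      (continuous_add_right 1).continuousWithinAt
    have h2 : ContinuousWithinAt F (Icc (0:ℝ) 2) ((0:ℝ) + 1) := by
      rw [zero_add]; exact hcF2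
    exact ContinuousWithinAt.comp (f := fun y : ℝ => y + 1) (g := F) (x := (0:ℝ)) h2 h1 hmap
  have hcF0 : ContinuousWithinAt F (Icc (0:ℝ) 1) 0 :=
    hcF1.mono (Icc_subset_Icc le_rfl (by norm_num))
  have hcG : ContinuousWithinAt G (Icc (0:ℝ) 1) 0 := by
    refine ((hcomp.sub hcF0).congr hGF ?_).mono (subset_refl _) |>.mono (subset_refl _)
    exact hGF 0 ⟨le_rfl, zero_le_one⟩
  -- limit along 𝓝[>] 0
  have hne : 𝓝[Ioc (0:ℝ) 1] (0:ℝ) = 𝓝[>] (0:ℝ) :=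
    nhdsWithin_Ioc_eq_nhdsGT zero_lt_one
  have h1 : Tendsto G (𝓝[Ioc (0:ℝ) 1] 0) (𝓝 (G 0)) :=
    hcG.tendsto.mono_left (nhdsWithin_mono _ Ioc_subset_Icc_self)
  have h2 : Tendsto G (𝓝[Ioc (0:ℝ) 1] 0) (𝓝 c) := by
    have hlogmul : Tendsto (fun y : ℝ => y * Real.log y) (𝓝[>] (0:ℝ)) (𝓝 0) := by
      have h := tendsto_log_mul_rpow_nhdsGT_zero one_pos
      have heq : ∀ y ∈ Ioi (0:ℝ), Real.log y * y ^ (1:ℝ) = y * Real.log y := by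
        intro y hy
        rw [Real.rpow_one]; ring
      exact (h.congr' (eventually_nhdsWithin_of_forall heq))
    have htend : Tendsto (fun y : ℝ => y * Real.log y - y + c) (𝓝[>] (0:ℝ)) (𝓝 c) := by
      have := (hlogmul.sub (tendsto_nhdsWithin_of_tendsto_nhds tendsto_id)).add_const c
      simpa using this
    rw [hne]
    refine htend.congr' ?_
    filter_upwards [self_mem_nhdsWithin] with y hy
    exact (G_pos_case hy).symm
  have : (0:ℝ) ∈ closure (Ioc (0:ℝ) 1) := by
    rw [closure_Ioc one_ne_zero.symm]; exact ⟨le_rfl, zero_le_one⟩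
  have hnb : (𝓝[Ioc (0:ℝ) 1] (0:ℝ)).NeBot := by
    rw [hne]; exact nhdsGT_neBot 0
  exact tendsto_nhds_unique h1 h2

end RaabeAux

/-- Raabe's formula: for every real `x ≥ 0`,
`∫_x^{x+1} ln Γ(t) dt = x·ln x − x + (1/2)·ln(2π)`
(with `x·ln x` interpreted as `0` at `x = 0`, which is automatic since `log 0 = 0`). -/
theorem raabe_formula (x : ℝ) (hx : 0 ≤ x) :
    (∫ t in x..(x + 1), Real.log (Real.Gamma t)) =
      x * Real.log x - x + (1 / 2) * Real.log (2 * Real.pi) := by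
  rcases hx.eq_or_lt with rfl | hx'
  · have h := RaabeAux.G_zero
    rw [RaabeAux.G] at h
    simp only [RaabeAux.lg] at h
    rw [h]
    simp
  · have h := RaabeAux.G_pos_case hx'
    rw [RaabeAux.G] at h
    simpa [RaabeAux.lg] using h
end

section
/- Let ψ denote the derivative of ln ∘ Γ on (0, ∞) and let S(t) = (t−1)·ψ(t−1) − t + 2. Then (i) for every integer n ≥ 2, S(n) = ∑_{k=1}^{n−1} ψ(k), and (ii) for every real x > 1, ∫_x^{x+1} S(t) dt = ln Γ(x) + 1/2 − (1/2) ln(2π). -/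
open Real intervalIntegral Finset Set MeasureTheory Filter Topology

namespace DigammaAux

noncomputable def dlg (t : ℝ) : ℝ := deriv (fun u : ℝ => Real.log (Real.Gamma u)) t

lemma diffGamma {x : ℝ} (hx : 0 < x) : DifferentiableAt ℝ Real.Gamma x :=
  Real.differentiableAt_Gamma fun m =>
    (((neg_nonpos).mpr (Nat.cast_nonneg m)).trans_lt hx).ne'

lemma hasDerivAt_lg {x : ℝ} (hx : 0 < x) :
    HasDerivAt (fun u : ℝ => Real.log (Real.Gamma u))
      (deriv Real.Gamma x / Real.Gamma x) x :=
  (diffGamma hx).hasDerivAt.log (Real.Gamma_pos_of_pos hx).ne'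

lemma dlg_eq {x : ℝ} (hx : 0 < x) :
    dlg x = deriv Real.Gamma x / Real.Gamma x := (hasDerivAt_lg hx).deriv

lemma contOn_lg : ContinuousOn (fun t : ℝ => Real.log (Real.Gamma t)) (Ioi (0:ℝ)) :=
  fun _ hx => (hasDerivAt_lg hx).differentiableAt.continuousAt.continuousWithinAt

lemma deriv_Gamma_eq {x : ℝ} (hx : 0 < x) :
    deriv Real.Gamma x = (deriv Complex.Gamma (x:ℂ)).re := by
  have h : ∀ m : ℕ, (x:ℂ) ≠ -m := by
    intro m hm
    have h0 : x = -(m:ℝ) := by exact_mod_cast hm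
    have : x ≤ 0 := h0 ▸ neg_nonpos.mpr (Nat.cast_nonneg m)
    linarith
  have h2 := (Complex.differentiableAt_Gamma (x:ℂ) h).hasDerivAt.real_of_complex
  have h3 : (fun y : ℝ => (Complex.Gamma (y:ℂ)).re) = Real.Gamma := by
    funext y; rw [Complex.Gamma_ofReal]; exact Complex.ofReal_re _
  rw [← h3]; exact h2.deriv

lemma contOn_derivCGamma :
    ContinuousOn (fun x : ℝ => (deriv Complex.Gamma (x:ℂ)).re) (Ioi (0:ℝ)) := by
  have hU : IsOpen {s : ℂ | 0 < s.re} := isOpen_lt continuous_const Complex.continuous_re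
  have h1 : AnalyticOnNhd ℂ Complex.Gamma {s : ℂ | 0 < s.re} := by
    refine DifferentiableOn.analyticOnNhd (fun s hs => ?_) hU
    refine (Complex.differentiableAt_Gamma s fun m => ?_).differentiableWithinAt
    intro hm
    rw [hm] at hs
    simp only [Set.mem_setOf_eq, Complex.neg_re, Complex.natCast_re] at hs
    have : (0:ℝ) ≤ (m:ℝ) := Nat.cast_nonneg m
    linarith
  have h2 : AnalyticOnNhd ℂ (deriv Complex.Gamma) {s : ℂ | 0 < s.re} := h1.deriv
  intro x hx
  have hcx : ContinuousAt (deriv Complex.Gamma) (x:ℂ) :=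
    (h2 (x:ℂ) (by simpa using hx)).continuousAt
  exact (Complex.continuous_re.continuousAt.comp
    (hcx.comp Complex.continuous_ofReal.continuousAt)).continuousWithinAt

lemma contOn_dlg : ContinuousOn dlg (Ioi (0:ℝ)) := by
  have h : ContinuousOn (fun x : ℝ => (deriv Complex.Gamma (x:ℂ)).re / Real.Gamma x)
      (Ioi (0:ℝ)) := by
    refine ContinuousOn.div contOn_derivCGamma
      (fun x hx => (diffGamma hx).continuousAt.continuousWithinAt)
      (fun x hx => (Real.Gamma_pos_of_pos hx).ne')
  refine h.congr fun x hx => ?_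
  rw [dlg_eq hx, deriv_Gamma_eq hx]

lemma dlg_rec {x : ℝ} (hx : 0 < x) : dlg (x + 1) = dlg x + 1 / x := by
  have hx1 : (0:ℝ) < x + 1 := by linarith
  have h1 : HasDerivAt (fun u : ℝ => Real.log (Real.Gamma (u + 1))) (dlg (x + 1)) x := by
    have := (hasDerivAt_lg hx1).comp x ((hasDerivAt_id x).add_const 1)
    simpa [dlg_eq hx1, Function.comp_def] using this
  have h2 : HasDerivAt (fun u : ℝ => Real.log u + Real.log (Real.Gamma u))
      (1 / x + dlg x) x := by
    have := (Real.hasDerivAt_log hx.ne').add (hasDerivAt_lg hx)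
    simpa [dlg_eq hx, one_div, Pi.add_def] using this
  have heq : (fun u : ℝ => Real.log (Real.Gamma (u + 1)))
      =ᶠ[𝓝 x] fun u : ℝ => Real.log u + Real.log (Real.Gamma u) := by
    filter_upwards [Ioi_mem_nhds hx] with u hu
    rw [Real.Gamma_add_one (ne_of_gt hu),
      Real.log_mul (ne_of_gt hu) (Real.Gamma_pos_of_pos hu).ne']
  have h3 : HasDerivAt (fun u : ℝ => Real.log (Real.Gamma (u + 1))) (1 / x + dlg x) x :=
    h2.congr_of_eventuallyEq heq
  rw [h1.unique h3, add_comm]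


noncomputable def Rb (x : ℝ) : ℝ := ∫ t in x..(x + 1), Real.log (Real.Gamma t)

lemma intInt_lg {a b : ℝ} (ha : 0 < a) (hb : 0 < b) :
    IntervalIntegrable (fun t : ℝ => Real.log (Real.Gamma t)) volume a b := by
  refine (contOn_lg.mono fun t ht => ?_).intervalIntegrable
  exact lt_of_lt_of_le (lt_min ha hb) ht.1

lemma hasDerivAt_Rb {x : ℝ} (hx : 0 < x) : HasDerivAt Rb (Real.log x) x := by
  set G : ℝ → ℝ := fun y => ∫ t in (1:ℝ)..y, Real.log (Real.Gamma t) with hGdef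
  have hG : ∀ y : ℝ, 0 < y → HasDerivAt G (Real.log (Real.Gamma y)) y := by
    intro y hy
    exact integral_hasDerivAt_right (intInt_lg one_pos hy)
      (contOn_lg.stronglyMeasurableAtFilter isOpen_Ioi y hy)
      (contOn_lg.continuousAt (Ioi_mem_nhds hy))
  have heq : Rb =ᶠ[𝓝 x] fun y => G (y + 1) - G y := by
    filter_upwards [Ioi_mem_nhds hx] with y hy
    have hy' : (0:ℝ) < y := hy
    have h1 := integral_add_adjacent_intervals (a := (1:ℝ)) (b := y) (c := y + 1)
      (intInt_lg one_pos hy') (intInt_lg hy' (by linarith))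
    show Rb y = G (y + 1) - G y
    rw [eq_sub_iff_add_eq']
    exact h1
  have hD : HasDerivAt (fun y => G (y + 1) - G y)
      (Real.log (Real.Gamma (x + 1)) - Real.log (Real.Gamma x)) x := by
    have h1 := (hG (x + 1) (by linarith)).comp x ((hasDerivAt_id x).add_const 1)
    simpa [Function.comp_def, Pi.sub_def] using h1.sub (hG x hx)
  have := hD.congr_of_eventuallyEq heq
  rwa [Real.Gamma_add_one hx.ne',
    Real.log_mul hx.ne' (Real.Gamma_pos_of_pos hx).ne', add_sub_cancel_right] at this

lemma raabe_sub_const {a b : ℝ} (ha : 0 < a) (hab : a ≤ b) :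
    Rb b - (b * Real.log b - b) = Rb a - (a * Real.log a - a) := by
  set h : ℝ → ℝ := fun y => Rb y - (y * Real.log y - y) with hdef
  have hder0 : ∀ y : ℝ, 0 < y → HasDerivAt h 0 y := by
    intro y hy
    have h2 : HasDerivAt (fun y : ℝ => y * Real.log y - y)
        (1 * Real.log y + y * y⁻¹ - 1) y :=
      ((hasDerivAt_id y).mul (Real.hasDerivAt_log hy.ne')).sub (hasDerivAt_id y)
    have h3 := (hasDerivAt_Rb hy).sub h2
    have : Real.log y - (1 * Real.log y + y * y⁻¹ - 1) = 0 := by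
      rw [mul_inv_cancel₀ hy.ne']; ring
    rwa [this] at h3
  have hcont : ContinuousOn h (Icc a b) := fun y hy =>
    ((hder0 y (lt_of_lt_of_le ha hy.1)).differentiableAt.continuousAt).continuousWithinAt
  have hder : ∀ y ∈ Ico a b, HasDerivWithinAt h 0 (Ici y) y := fun y hy =>
    (hder0 y (lt_of_lt_of_le ha hy.1)).hasDerivWithinAt
  exact constant_of_has_deriv_right_zero hcont hder b (right_mem_Icc.mpr hab)

lemma intInt_linear (c d a b : ℝ) :
    IntervalIntegrable (fun t : ℝ => c + d * t) MeasureTheory.volume a b :=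
  (continuous_const.add (continuous_const.mul continuous_id)).intervalIntegrable a b

lemma integral_linear (c d a : ℝ) :
    (∫ t in a..(a + 1), (c + d * t)) = c + d * (a + 1/2) := by
  have h1 : IntervalIntegrable (fun _ : ℝ => c) MeasureTheory.volume a (a + 1) :=
    intervalIntegrable_const
  have h2 : IntervalIntegrable (fun t : ℝ => d * t) MeasureTheory.volume a (a + 1) :=
    (continuous_const.mul continuous_id).intervalIntegrable a (a + 1)
  have h3 : (∫ x in a..(a + 1), x) = ((a + 1) ^ 2 - a ^ 2) / 2 := integral_id
  have h4 : (∫ _x in a..(a + 1), c) = ((a + 1) - a) • c := integral_const c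
  rw [_root_.intervalIntegral.integral_add h1 h2,
    _root_.intervalIntegral.integral_const_mul, h3, h4, smul_eq_mul]
  ring

lemma Rb_le {y : ℝ} (hy : 0 < y) :
    Rb y ≤ (1/2) * (Real.log (Real.Gamma y) + Real.log (Real.Gamma (y + 1))) := by
  set A := Real.log (Real.Gamma y)
  set B := Real.log (Real.Gamma (y + 1))
  have hconv := Real.convexOn_log_Gamma
  have hpt : ∀ t ∈ Icc y (y + 1),
      Real.log (Real.Gamma t) ≤ (y + 1 - t) * A + (t - y) * B := by
    intro t ht
    have h1 : (0:ℝ) ≤ y + 1 - t := by linarith [ht.2]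
    have h2 : (0:ℝ) ≤ t - y := by linarith [ht.1]
    have h3 : (y + 1 - t) + (t - y) = 1 := by ring
    have := hconv.2 (Set.mem_Ioi.mpr hy) (Set.mem_Ioi.mpr (by linarith : (0:ℝ) < y + 1))
      h1 h2 h3
    simp only [smul_eq_mul, Function.comp_apply] at this
    have harg : (y + 1 - t) * y + (t - y) * (y + 1) = t := by ring
    rwa [harg] at this
  have hfun : ∀ t : ℝ, (y + 1 - t) * A + (t - y) * B
      = ((y + 1) * A - y * B) + (B - A) * t := by intro t; ring
  have hint : (∫ t in y..(y + 1), Real.log (Real.Gamma t))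
      ≤ ∫ t in y..(y + 1), (((y + 1) * A - y * B) + (B - A) * t) := by
    refine intervalIntegral.integral_mono_on (by linarith) (intInt_lg hy (by linarith))
      (intInt_linear _ _ _ _) ?_
    intro t ht
    rw [← hfun t]
    exact hpt t ht
  calc Rb y ≤ _ := hint
    _ = (1/2) * (A + B) := by rw [integral_linear]; ring

lemma Rb_ge {y : ℝ} (hy : 0 < y) :
    Real.log (Real.Gamma (y + 1)) - (1/2) * Real.log (y + 1) ≤ Rb y := by
  set B := Real.log (Real.Gamma (y + 1)) with hB
  have hy1 : (0:ℝ) < y + 1 := by linarith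
  have hconv := Real.convexOn_log_Gamma
  have hslope : Real.log (Real.Gamma (y + 2)) - Real.log (Real.Gamma (y + 1))
      = Real.log (y + 1) := by
    have : y + 2 = (y + 1) + 1 := by ring
    rw [this, Real.Gamma_add_one hy1.ne',
      Real.log_mul hy1.ne' (Real.Gamma_pos_of_pos hy1).ne', add_sub_cancel_right]
  have hpt : ∀ t ∈ Icc y (y + 1),
      (B - (y + 1) * Real.log (y + 1)) + Real.log (y + 1) * t ≤ Real.log (Real.Gamma t) := by
    intro t ht
    rcases eq_or_lt_of_le ht.2 with h | h
    · rw [h]; simp [hB]; nlinarith [Real.log_nonneg (by linarith : (1:ℝ) ≤ y + 1)]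
    · have ht0 : (0:ℝ) < t := lt_of_lt_of_le hy ht.1
      have hsl := hconv.slope_mono_adjacent (Set.mem_Ioi.mpr ht0)
        (Set.mem_Ioi.mpr (by linarith : (0:ℝ) < y + 2)) h (by linarith : y + 1 < y + 2)
      simp only [Function.comp_apply] at hsl
      have hden : (0:ℝ) < y + 1 - t := by linarith
      have h2 : (Real.log (Real.Gamma (y + 1)) - Real.log (Real.Gamma t)) / (y + 1 - t)
          ≤ Real.log (y + 1) := by
        have hden2 : y + 2 - (y + 1) = 1 := by ring
        rw [hden2, div_one, hslope] at hsl
        exact hsl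
      rw [div_le_iff₀ hden] at h2
      nlinarith
  have hint : (∫ t in y..(y + 1),
        ((B - (y + 1) * Real.log (y + 1)) + Real.log (y + 1) * t))
      ≤ ∫ t in y..(y + 1), Real.log (Real.Gamma t) := by
    refine intervalIntegral.integral_mono_on (by linarith) (intInt_linear _ _ _ _)
      (intInt_lg hy hy1) ?_
    intro t ht; exact hpt t ht
  calc B - (1/2) * Real.log (y + 1)
      = ∫ t in y..(y + 1), ((B - (y + 1) * Real.log (y + 1)) + Real.log (y + 1) * t) := by
        rw [integral_linear]; ring
    _ ≤ Rb y := hint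


lemma raabe {x : ℝ} (hx : 0 < x) :
    Rb x = x * Real.log x - x + (1/2) * Real.log (2 * Real.pi) := by
  have hC : ∀ y : ℝ, 0 < y → Rb y = y * Real.log y - y + (Rb 1 + 1) := by
    intro y hy
    rcases le_total y 1 with h | h
    · have := raabe_sub_const hy h
      simp only [Real.log_one, mul_zero, one_mul] at this
      linarith
    · have := raabe_sub_const one_pos h
      simp only [Real.log_one, mul_zero, one_mul] at this
      linarith
  set C := Rb 1 + 1 with hCdef
  -- express bounds at natural numbers
  have key : ∀ n : ℕ, 1 ≤ n →
      Real.log (Stirling.stirlingSeq n) + (1/2) * Real.log 2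
        = Real.log ((Nat.factorial n : ℕ) : ℝ) - (1/2) * Real.log n - n * Real.log n + n := by
    intro n hn
    have hn0 : (0:ℝ) < n := by exact_mod_cast hn
    rw [Stirling.log_stirlingSeq_formula,
      Real.log_mul (two_ne_zero) hn0.ne',
      Real.log_div hn0.ne' (Real.exp_ne_zero 1), Real.log_exp]
    ring
  have hfact : ∀ n : ℕ, Real.log (Real.Gamma ((n:ℝ) + 1)) = Real.log ((Nat.factorial n : ℕ) : ℝ) := by
    intro n; rw [Real.Gamma_nat_eq_factorial]
  have hgrec : ∀ n : ℕ, 1 ≤ n →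
      Real.log (Real.Gamma ((n:ℝ) + 1))
        = Real.log (n:ℝ) + Real.log (Real.Gamma (n:ℝ)) := by
    intro n hn
    have hn0 : (0:ℝ) < n := by exact_mod_cast hn
    rw [Real.Gamma_add_one hn0.ne', Real.log_mul hn0.ne' (Real.Gamma_pos_of_pos hn0).ne']
  have hU : ∀ n : ℕ, 1 ≤ n →
      C ≤ Real.log (Stirling.stirlingSeq n) + (1/2) * Real.log 2 := by
    intro n hn
    have hn0 : (0:ℝ) < n := by exact_mod_cast hn
    have h1 := Rb_le hn0
    rw [hC n hn0] at h1
    have h2 := key n hn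
    have h3 := hfact n
    have h4 := hgrec n hn
    -- ½(lgΓ n + lgΓ (n+1)) = lgΓ(n+1) - ½ log n = log n! - ½ log n
    nlinarith [h1, h2, h3, h4]
  have hL : ∀ n : ℕ, 1 ≤ n →
      Real.log (Stirling.stirlingSeq n) + (1/2) * Real.log 2
        - (1/2) * (Real.log ((n:ℝ) + 1) - Real.log (n:ℝ)) ≤ C := by
    intro n hn
    have hn0 : (0:ℝ) < n := by exact_mod_cast hn
    have h1 := Rb_ge hn0
    rw [hC n hn0] at h1
    have h2 := key n hn
    have h3 := hfact n
    nlinarith [h1, h2, h3]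
  -- limits
  have hst : Filter.Tendsto (fun n : ℕ => Real.log (Stirling.stirlingSeq n))
      Filter.atTop (𝓝 (Real.log (Real.sqrt π))) :=
    ((Real.continuousAt_log (Real.sqrt_pos.mpr Real.pi_pos).ne').tendsto).comp
      Stirling.tendsto_stirlingSeq_sqrt_pi
  have hUlim : Filter.Tendsto
      (fun n : ℕ => Real.log (Stirling.stirlingSeq n) + (1/2) * Real.log 2)
      Filter.atTop (𝓝 ((1/2) * Real.log (2 * Real.pi))) := by
    have h0 := hst.add (tendsto_const_nhds (x := (1/2) * Real.log 2))
    have he : Real.log (Real.sqrt π) + (1/2) * Real.log 2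
        = (1/2) * Real.log (2 * Real.pi) := by
      rw [Real.log_sqrt Real.pi_pos.le, Real.log_mul two_ne_zero Real.pi_pos.ne']
      ring
    rwa [he] at h0
  have hdiff : Filter.Tendsto (fun n : ℕ => Real.log ((n:ℝ) + 1) - Real.log (n:ℝ))
      Filter.atTop (𝓝 0) := by
    have h1 : Filter.Tendsto (fun n : ℕ => 1 + 1 / (n:ℝ)) Filter.atTop (𝓝 1) := by
      have := tendsto_const_nhds (x := (1:ℝ)) (f := Filter.atTop (α := ℕ))
        |>.add tendsto_one_div_atTop_nhds_zero_nat
      simpa using this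
    have h2 : Filter.Tendsto (fun n : ℕ => Real.log (1 + 1 / (n:ℝ)))
        Filter.atTop (𝓝 0) := by
      have := ((Real.continuousAt_log one_ne_zero).tendsto).comp h1
      simpa [Function.comp_def] using this
    refine h2.congr' ?_
    filter_upwards [Filter.eventually_ge_atTop 1] with n hn
    have hn0 : (0:ℝ) < n := by exact_mod_cast hn
    rw [show 1 + 1 / (n:ℝ) = ((n:ℝ) + 1) / n by field_simp,
      Real.log_div (by positivity) hn0.ne']
  have hLlim : Filter.Tendsto
      (fun n : ℕ => Real.log (Stirling.stirlingSeq n) + (1/2) * Real.log 2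
        - (1/2) * (Real.log ((n:ℝ) + 1) - Real.log (n:ℝ)))
      Filter.atTop (𝓝 ((1/2) * Real.log (2 * Real.pi))) := by
    have := hUlim.sub ((hdiff.const_mul (1/2 : ℝ)))
    simpa using this
  have hC1 : C ≤ (1/2) * Real.log (2 * Real.pi) :=
    ge_of_tendsto hUlim (by
      filter_upwards [Filter.eventually_ge_atTop 1] with n hn
      exact hU n hn)
  have hC2 : (1/2) * Real.log (2 * Real.pi) ≤ C :=
    le_of_tendsto hLlim (by
      filter_upwards [Filter.eventually_ge_atTop 1] with n hn
      exact hL n hn)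
  have : C = (1/2) * Real.log (2 * Real.pi) := le_antisymm hC1 hC2
  rw [hC x hx, this]


end DigammaAux

/-- Let `ψ` be the derivative of `ln ∘ Γ` (the digamma function) and
`S(t) = (t−1)·ψ(t−1) − t + 2`. Then `S(n) = ∑_{k=1}^{n−1} ψ(k)` for integers `n ≥ 2`,
and `∫_x^{x+1} S(t) dt = ln Γ(x) + 1/2 − (1/2)·ln(2π)` for real `x > 1`. -/
theorem digamma_partial_sums (ψ : ℝ → ℝ)
    (hψ : ∀ t : ℝ, ψ t = deriv (fun u : ℝ => Real.log (Real.Gamma u)) t)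
    (S : ℝ → ℝ) (hS : ∀ t : ℝ, S t = (t - 1) * ψ (t - 1) - t + 2) :
    (∀ n : ℕ, 2 ≤ n → S n = ∑ k ∈ Finset.Ico 1 n, ψ k) ∧
    (∀ x : ℝ, 1 < x →
      (∫ t in x..(x + 1), S t) =
        Real.log (Real.Gamma x) + 1 / 2 - (1 / 2) * Real.log (2 * Real.pi)) := by
  have hψd : ∀ t : ℝ, ψ t = DigammaAux.dlg t := fun t => hψ t
  constructor
  · -- part (i)
    intro n hn
    induction n, hn using Nat.le_induction with
    | base =>
      rw [show Finset.Ico 1 2 = {1} from rfl, Finset.sum_singleton, hS]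
      push_cast
      norm_num
    | succ n hn ih =>
      rw [Finset.sum_Ico_succ_top (by omega : 1 ≤ n), ← ih]
      have hn2 : (2:ℝ) ≤ (n:ℝ) := by exact_mod_cast hn
      have h0 : (0:ℝ) < (n:ℝ) - 1 := by linarith
      have hrec := DigammaAux.dlg_rec h0
      rw [show (n:ℝ) - 1 + 1 = (n:ℝ) by ring] at hrec
      rw [hS, hS, hψd, hψd, hψd]
      push_cast
      rw [show (n:ℝ) + 1 - 1 = (n:ℝ) by ring, hrec]
      have hne : (n:ℝ) - 1 ≠ 0 := h0.ne'
      field_simp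
      ring
  · -- part (ii)
    intro x hx
    have hx0 : (0:ℝ) < x - 1 := by linarith
    have huIcc : Set.uIcc x (x + 1) = Set.Icc x (x + 1) := Set.uIcc_of_le (by linarith)
    have hcont : ContinuousOn (fun t : ℝ => DigammaAux.dlg (t - 1)) (Set.uIcc x (x + 1)) := by
      rw [huIcc]
      refine DigammaAux.contOn_dlg.comp
        ((continuous_id.sub continuous_const).continuousOn) ?_
      intro t ht
      exact Set.mem_Ioi.mpr (by linarith [ht.1] : (0:ℝ) < t - 1)
    have hu : ∀ t ∈ Set.uIcc x (x + 1), HasDerivAt (fun t : ℝ => t - 1) 1 t :=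
      fun t _ => (hasDerivAt_id t).sub_const 1
    have hv : ∀ t ∈ Set.uIcc x (x + 1),
        HasDerivAt (fun t : ℝ => Real.log (Real.Gamma (t - 1)))
          (DigammaAux.dlg (t - 1)) t := by
      intro t ht
      rw [huIcc] at ht
      have ht1 : (0:ℝ) < t - 1 := by linarith [ht.1]
      have := (DigammaAux.hasDerivAt_lg ht1).comp t ((hasDerivAt_id t).sub_const 1)
      simpa [DigammaAux.dlg_eq ht1, Function.comp_def] using this
    have hIBP := intervalIntegral.integral_mul_deriv_eq_deriv_mul hu hv
      (intervalIntegrable_const) (hcont.intervalIntegrable)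
    simp only [one_mul] at hIBP
    rw [show x + 1 - 1 = x by ring] at hIBP
    have hshift : (∫ t in x..(x + 1), Real.log (Real.Gamma (t - 1)))
        = DigammaAux.Rb (x - 1) := by
      rw [intervalIntegral.integral_comp_sub_right
        (fun u : ℝ => Real.log (Real.Gamma u)) 1]
      show _ = ∫ t in (x-1)..((x-1)+1), Real.log (Real.Gamma t)
      rw [show (x - 1) + 1 = x + 1 - 1 by ring]
    have hraabe := DigammaAux.raabe hx0
    have hint1 : IntervalIntegrable (fun t : ℝ => (t - 1) * DigammaAux.dlg (t - 1))
        MeasureTheory.volume x (x + 1) :=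
      (((continuous_id.sub continuous_const).continuousOn).mul hcont).intervalIntegrable
    have hint2 : IntervalIntegrable (fun t : ℝ => 2 - t)
        MeasureTheory.volume x (x + 1) :=
      (continuous_const.sub continuous_id).intervalIntegrable x (x + 1)
    have hsplit : (∫ t in x..(x + 1), S t)
        = (∫ t in x..(x + 1), (t - 1) * DigammaAux.dlg (t - 1))
          + ∫ t in x..(x + 1), (2 - t) := by
      rw [← intervalIntegral.integral_add hint1 hint2]
      apply intervalIntegral.integral_congr
      intro t _
      rw [hS t, hψd (t - 1)]
      ring
    have h2t : (∫ t in x..(x + 1), (2 - t)) = 3/2 - x := by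
      rw [show (fun t : ℝ => 2 - t) = fun t : ℝ => 2 + (-1) * t from funext fun t => by ring,
        DigammaAux.integral_linear]
      ring
    have hgam : Real.log (Real.Gamma x)
        = Real.log (x - 1) + Real.log (Real.Gamma (x - 1)) := by
      conv_lhs => rw [show x = (x - 1) + 1 by ring]
      rw [Real.Gamma_add_one hx0.ne',
        Real.log_mul hx0.ne' (Real.Gamma_pos_of_pos hx0).ne']
    rw [hsplit, hIBP, hshift, hraabe, h2t]
    linear_combination (x - 1) * hgam
end

section
/- Let P(k) = k⁵/5 − k⁴/2 + k³/3 − k/30. Then (i) for every natural number n, P(n) = ∑_{j=0}^{n−1} j⁴, (ii) P'(k) = k⁴ − 2k³ + k² − 1/30, and (iii) for every real x ≥ −1/30 with 1/4 + √(x + 1/30) ≥ 0, P'( 1/2 + (1/30)·√(30·√(900x + 30) + 225) ) = x. -/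
open Real Finset

lemma deriv_aux (P : ℝ → ℝ)
    (hP : ∀ k : ℝ, P k = k ^ 5 / 5 - k ^ 4 / 2 + k ^ 3 / 3 - k / 30) (k : ℝ) :
    deriv P k = k ^ 4 - 2 * k ^ 3 + k ^ 2 - 1 / 30 := by
  have hfun : P = fun k : ℝ => k ^ 5 / 5 - k ^ 4 / 2 + k ^ 3 / 3 - k / 30 := funext hP
  rw [hfun]
  have h : HasDerivAt (fun k : ℝ => k ^ 5 / 5 - k ^ 4 / 2 + k ^ 3 / 3 - k / 30)
      (k ^ 4 - 2 * k ^ 3 + k ^ 2 - 1 / 30) k := by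
    have := ((((hasDerivAt_pow 5 k).div_const 5).sub
      ((hasDerivAt_pow 4 k).div_const 2)).add
      ((hasDerivAt_pow 3 k).div_const 3)).sub ((hasDerivAt_id k).div_const 30)
    refine this.congr_deriv ?_
    norm_num
    ring
  exact h.deriv

/-- `P(k) = k⁵/5 − k⁴/2 + k³/3 − k/30` interpolates the partial sums of `∑ j⁴`, its
derivative is `k⁴ − 2k³ + k² − 1/30`, and for `x ≥ −1/30` with
`1/4 + √(x + 1/30) ≥ 0`, the derivative evaluated at
`1/2 + (1/30)·√(30·√(900x + 30) + 225)` gives back `x`. -/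
theorem fourth_powers_numerosity (P : ℝ → ℝ)
    (hP : ∀ k : ℝ, P k = k ^ 5 / 5 - k ^ 4 / 2 + k ^ 3 / 3 - k / 30) :
    (∀ n : ℕ, P n = ∑ j ∈ Finset.range n, (j : ℝ) ^ 4) ∧
    (∀ k : ℝ, deriv P k = k ^ 4 - 2 * k ^ 3 + k ^ 2 - 1 / 30) ∧
    (∀ x : ℝ, -1 / 30 ≤ x → 0 ≤ 1 / 4 + Real.sqrt (x + 1 / 30) →
      deriv P (1 / 2 + (1 / 30) * Real.sqrt (30 * Real.sqrt (900 * x + 30) + 225)) = x) := by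
  refine ⟨?_, deriv_aux P hP, ?_⟩
  · intro n
    induction n with
    | zero => simp [hP]
    | succ n ih =>
      rw [Finset.sum_range_succ, ← ih, hP, hP]
      push_cast
      ring
  · intro x hx hx'
    have h30 : (0:ℝ) ≤ 900 * x + 30 := by linarith
    have hs : Real.sqrt (900 * x + 30) = 30 * Real.sqrt (x + 1 / 30) := by
      rw [show (900 : ℝ) * x + 30 = 30 ^ 2 * (x + 1 / 30) by ring, Real.sqrt_mul (by positivity)]
      rw [Real.sqrt_sq (by norm_num)]
    set t := Real.sqrt (x + 1 / 30) with ht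
    have htsq : t ^ 2 = x + 1 / 30 := Real.sq_sqrt (by linarith)
    have hin : 30 * Real.sqrt (900 * x + 30) + 225 = 900 * (t + 1 / 4) := by
      rw [hs]; ring
    rw [deriv_aux P hP, hin]
    have hu : Real.sqrt (900 * (t + 1 / 4)) = 30 * Real.sqrt (t + 1 / 4) := by
      rw [show (900:ℝ) * (t + 1/4) = 30 ^ 2 * (t + 1/4) by ring,
        Real.sqrt_mul (by positivity), Real.sqrt_sq (by norm_num)]
    rw [hu]
    set u := Real.sqrt (t + 1 / 4) with hud
    have husq : u ^ 2 = t + 1 / 4 := Real.sq_sqrt (by linarith)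
    have hk : 1 / 2 + 1 / 30 * (30 * u) = 1 / 2 + u := by ring
    rw [hk]
    have key : (1 / 2 + u) ^ 2 - (1 / 2 + u) = t := by
      nlinarith [husq]
    nlinarith [key, htsq]
end
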